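/- For every prime p > 5, the harmonic number H_{⌊p/6⌋} computed in the field ℤ/pℤ is congruent to 0 modulo p if and only if p² divides 432^{p−1} − 1. -/

import Mathlib

/-- The harmonic number `H_⌊p/N⌋` computed in `ZMod p`: the sum of the
inverses of `1, 2, …, ⌊p/N⌋` in the field `ℤ/pℤ`. -/
def harmonicMod (p n : ℕ) : ZMod p :=
  ∑ j ∈ Finset.Icc 1 n, ((j : ZMod p))⁻¹

section Helpers
variable {p : ℕ} [hp : Fact p.Prime]

/-- In `ZMod p²`, `p*x = p*y` iff `x ≡ y mod p`. -/
lemma pmul_iff (x y : ℤ) :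
    ((p : ZMod (p^2)) * (x : ZMod (p^2)) = (p : ZMod (p^2)) * (y : ZMod (p^2)))
      ↔ ((x : ZMod p) = (y : ZMod p)) := by
  have hp0 : (p : ℤ) ≠ 0 := by exact_mod_cast hp.out.ne_zero
  have h1 : ((p : ZMod (p^2)) * (x : ZMod (p^2))) = (((p * x : ℤ)) : ZMod (p^2)) := by push_cast; ring
  have h2 : ((p : ZMod (p^2)) * (y : ZMod (p^2))) = (((p * y : ℤ)) : ZMod (p^2)) := by push_cast; ring
  rw [h1, h2, ZMod.intCast_eq_intCast_iff, ZMod.intCast_eq_intCast_iff,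
    Int.modEq_iff_dvd, Int.modEq_iff_dvd]
  constructor
  · intro h
    have : (p : ℤ) * p ∣ (p : ℤ) * (y - x) := by
      push_cast at h ⊢; convert h using 1 <;> ring
    exact (mul_dvd_mul_iff_left hp0).mp this
  · intro h
    have : (p : ℤ) * p ∣ (p : ℤ) * (y - x) := mul_dvd_mul_left _ h
    push_cast at this ⊢; convert this using 1 <;> ring

lemma prod_one_add (s : Finset ℕ) (x : ℕ → ZMod (p^2)) :
    ∏ j ∈ s, (1 + (p : ZMod (p^2)) * x j) = 1 + (p : ZMod (p^2)) * ∑ j ∈ s, x j := by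
  have hp2 : (p : ZMod (p^2))^2 = 0 := by
    have := ZMod.natCast_self (p^2); push_cast at this; exact this
  induction s using Finset.induction with
  | empty => simp
  | insert _ _ h ih =>
    rw [Finset.prod_insert h, ih, Finset.sum_insert h]
    linear_combination (x _ * (∑ j ∈ _, x j)) * hp2

end Helpers

section Q
variable {p : ℕ} [hp : Fact p.Prime]

/-- The Fermat quotient of `a`, as an element of `ZMod p`. -/
def qz (p a : ℕ) : ZMod p := ((((a : ℤ)^(p-1) - 1)/(p : ℤ) : ℤ) : ZMod p)

lemma fermat_dvd {a : ℕ} (ha : ¬ p ∣ a) : (p : ℤ) ∣ (a : ℤ)^(p-1) - 1 := by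
  have h0 : (a : ZMod p) ≠ 0 := by
    simpa [ZMod.natCast_eq_zero_iff] using ha
  have := ZMod.pow_card_sub_one_eq_one h0
  have h2 : (((a : ℤ)^(p-1) - 1 : ℤ) : ZMod p) = 0 := by push_cast; rw [this]; ring
  exact (ZMod.intCast_zmod_eq_zero_iff_dvd _ _).mp h2

lemma qz_spec {a : ℕ} (ha : ¬ p ∣ a) :
    (p : ℤ) * (((a : ℤ)^(p-1) - 1)/(p : ℤ)) = (a : ℤ)^(p-1) - 1 :=
  Int.mul_ediv_cancel' (fermat_dvd ha)

lemma qz_mul {a b : ℕ} (ha : ¬ p ∣ a) (hb : ¬ p ∣ b) :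
    qz p (a*b) = qz p a + qz p b := by
  have hab : ¬ p ∣ a * b := by
    intro h; rcases (Nat.Prime.dvd_mul hp.out).mp h with h | h <;> tauto
  have hp0 : (p : ℤ) ≠ 0 := by exact_mod_cast hp.out.ne_zero
  set u := ((a : ℤ)^(p-1) - 1)/(p : ℤ)
  set v := ((b : ℤ)^(p-1) - 1)/(p : ℤ)
  set w := (((a*b : ℕ) : ℤ)^(p-1) - 1)/(p : ℤ)
  have hu := qz_spec ha
  have hv := qz_spec hb
  have hw := qz_spec hab
  have key : w = u * (b : ℤ)^(p-1) + v := by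
    have : (p : ℤ) * w = (p : ℤ) * (u * (b : ℤ)^(p-1) + v) := by
      rw [hw]; push_cast
      calc ((a:ℤ)*b)^(p-1) - 1 = ((a:ℤ)^(p-1) - 1) * (b:ℤ)^(p-1) + ((b:ℤ)^(p-1) - 1) := by ring
      _ = (p : ℤ) * (u * (b : ℤ)^(p-1) + v) := by rw [← hu, ← hv]; ring
    exact mul_left_cancel₀ hp0 this
  have hb1 : ((b : ℤ)^(p-1) : ZMod p) = 1 := by
    have h0 : (b : ZMod p) ≠ 0 := by
      simpa [ZMod.natCast_eq_zero_iff] using hb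
    push_cast
    exact ZMod.pow_card_sub_one_eq_one h0
  show (w : ZMod p) = (u : ZMod p) + (v : ZMod p)
  rw [key]; push_cast at hb1 ⊢; rw [hb1]; ring

end Q

section Harm
variable {p : ℕ} [hp : Fact p.Prime]

lemma cast_p_sub {j : ℕ} (hj : j ≤ p) : (((p - j : ℕ) : ZMod p)) = -(j : ZMod p) := by
  have : ((p : ℕ) : ZMod p) = 0 := ZMod.natCast_self p
  push_cast [hj]
  rw [this]; ring

lemma harm_p_sub_one (hodd : p % 2 = 1) : harmonicMod p (p-1) = 0 := by
  have h2 : (2 : ZMod p) ≠ 0 := by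
    intro h
    have hd : p ∣ 2 := (ZMod.natCast_eq_zero_iff 2 p).mp (by exact_mod_cast h)
    have := Nat.le_of_dvd (by norm_num) hd
    have := hp.out.two_le
    omega
  have hrev : harmonicMod p (p-1) = ∑ j ∈ Finset.Icc 1 (p-1), -(((j:ℕ) : ZMod p))⁻¹ := by
    refine Finset.sum_nbij' (i := fun j => p - j) (j := fun j => p - j) ?_ ?_ ?_ ?_ ?_
    · intro a ha; simp only [Finset.mem_Icc] at ha ⊢; omega
    · intro a ha; simp only [Finset.mem_Icc] at ha ⊢; omega
    · intro a ha; simp only [Finset.mem_Icc] at ha; omega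
    · intro a ha; simp only [Finset.mem_Icc] at ha; omega
    · intro j hj; simp only [Finset.mem_Icc] at hj
      rw [cast_p_sub (by omega), inv_neg, neg_neg]
  rw [Finset.sum_neg_distrib] at hrev
  have : (2 : ZMod p) * harmonicMod p (p-1) = 0 := by
    unfold harmonicMod; unfold harmonicMod at hrev; linear_combination hrev
  rcases mul_eq_zero.mp this with h | h
  · exact absurd h h2
  · exact h

lemma harm_sym (hodd : p % 2 = 1) {m : ℕ} (hm : m ≤ p - 1) :
    harmonicMod p (p - 1 - m) = harmonicMod p m := by
  have hp1 : 2 ≤ p := hp.out.two_le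
  have hsplit : harmonicMod p m + ∑ j ∈ Finset.Ioc m (p-1), ((j : ZMod p))⁻¹
      = harmonicMod p (p-1) := by
    unfold harmonicMod
    rw [show Finset.Icc 1 m = Finset.Ioc 0 m by rw [← Finset.Icc_add_one_left_eq_Ioc, zero_add],
        show Finset.Icc 1 (p-1) = Finset.Ioc 0 (p-1) by rw [← Finset.Icc_add_one_left_eq_Ioc, zero_add]]
    exact Finset.sum_Ioc_consecutive _ (Nat.zero_le m) hm
  have hrev : ∑ j ∈ Finset.Ioc m (p-1), ((j : ZMod p))⁻¹
      = ∑ j ∈ Finset.Icc 1 (p-1-m), -(((j:ℕ) : ZMod p))⁻¹ := by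
    refine Finset.sum_nbij' (i := fun j => p - j) (j := fun j => p - j) ?_ ?_ ?_ ?_ ?_
    · intro a ha; simp only [Finset.mem_Ioc, Finset.mem_Icc] at ha ⊢; omega
    · intro a ha; simp only [Finset.mem_Ioc, Finset.mem_Icc] at ha ⊢; omega
    · intro a ha; simp only [Finset.mem_Ioc] at ha; omega
    · intro a ha; simp only [Finset.mem_Icc] at ha; omega
    · intro j hj; simp only [Finset.mem_Ioc] at hj
      rw [cast_p_sub (by omega), inv_neg, neg_neg]
  rw [Finset.sum_neg_distrib] at hrev
  rw [hrev, harm_p_sub_one hodd] at hsplit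
  unfold harmonicMod at hsplit ⊢
  linear_combination -hsplit

end Harm

section Glaisher
variable {p : ℕ} [hp : Fact p.Prime]

lemma pmul_nat {x y : ℕ} (h : (x : ZMod p) = (y : ZMod p)) :
    (p : ZMod (p^2)) * (x : ZMod (p^2)) = (p : ZMod (p^2)) * (y : ZMod (p^2)) := by
  have := (pmul_iff (p := p) (x : ℤ) (y : ℤ)).mpr (by push_cast; exact_mod_cast h)
  push_cast at this; exact this

lemma glaisher {a : ℕ} (ha : ¬ p ∣ a) :
    (a : ZMod p) * qz p a
      = ∑ j ∈ Finset.Icc 1 (p-1), ((a*j/p : ℕ) : ZMod p) * ((j : ZMod p))⁻¹ := by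
  have hp2 : 2 ≤ p := hp.out.two_le
  have haz : (a : ZMod p) ≠ 0 := by
    simpa [ZMod.natCast_eq_zero_iff] using ha
  have haj : ∀ j ∈ Finset.Icc 1 (p-1), ¬ p ∣ a * j := by
    intro j hj hd
    simp only [Finset.mem_Icc] at hj
    rcases (Nat.Prime.dvd_mul hp.out).mp hd with h | h
    · exact ha h
    · have := Nat.le_of_dvd (by omega) h; omega
  have hajz : ∀ j ∈ Finset.Icc 1 (p-1), ((a*j : ℕ) : ZMod p) ≠ 0 := by
    intro j hj h
    exact haj j hj ((ZMod.natCast_eq_zero_iff (a*j) p).mp h)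
  set F : ℕ → ℕ := fun j => a*j/p with hF
  set Rr : ℕ → ℕ := fun j => a*j % p with hRr
  set NI : ℕ → ℕ := fun j => (((a*j : ℕ) : ZMod p))⁻¹.val with hNI
  have hNIcast : ∀ j, ((NI j : ℕ) : ZMod p) = (((a*j : ℕ) : ZMod p))⁻¹ := by
    intro j
    simp [hNI, ZMod.natCast_val, ZMod.cast_id]
  have hinv : ∀ j ∈ Finset.Icc 1 (p-1), ((Rr j * NI j : ℕ) : ZMod p) = 1 := by
    intro j hj
    simp only [hRr, hNI]
    rw [Nat.cast_mul, ZMod.natCast_mod, ZMod.natCast_val, ZMod.cast_id]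
    exact mul_inv_cancel₀ (hajz j hj)
  -- key factorization in ZMod p²
  have key : ∀ j ∈ Finset.Icc 1 (p-1), ((a*j : ℕ) : ZMod (p^2))
      = (Rr j : ZMod (p^2)) * (1 + (p : ZMod (p^2)) * ((F j * NI j : ℕ) : ZMod (p^2))) := by
    intro j hj
    have h1 : p * F j + Rr j = a * j := Nat.div_add_mod (a*j) p
    have h2 : (p : ZMod (p^2)) * ((Rr j * (F j * NI j) : ℕ) : ZMod (p^2))
        = (p : ZMod (p^2)) * ((F j : ℕ) : ZMod (p^2)) := by
      apply pmul_nat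
      have := hinv j hj
      push_cast at this ⊢
      rw [show (Rr j : ZMod p) * ((F j : ZMod p) * (NI j : ZMod p))
            = (F j : ZMod p) * ((Rr j : ZMod p) * (NI j : ZMod p)) by ring, this, mul_one]
    calc ((a*j : ℕ) : ZMod (p^2)) = ((p * F j + Rr j : ℕ) : ZMod (p^2)) := by rw [h1]
    _ = (Rr j : ZMod (p^2)) + (p : ZMod (p^2)) * ((Rr j * (F j * NI j) : ℕ) : ZMod (p^2)) := by
        rw [h2]; push_cast; ring
    _ = (Rr j : ZMod (p^2)) * (1 + (p : ZMod (p^2)) * ((F j * NI j : ℕ) : ZMod (p^2))) := by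
        push_cast; ring
  -- permutation of residues
  have hinj : Set.InjOn Rr (Finset.Icc 1 (p-1)) := by
    intro j1 hj1 j2 hj2 h
    simp only [Finset.coe_Icc, Set.mem_Icc] at hj1 hj2
    have hc : ((a*j1 : ℕ) : ZMod p) = ((a*j2 : ℕ) : ZMod p) := by
      rw [← ZMod.natCast_mod (a*j1) p, ← ZMod.natCast_mod (a*j2) p]
      exact_mod_cast congrArg (Nat.cast : ℕ → ZMod p) h
    push_cast at hc
    have hj : (j1 : ZMod p) = (j2 : ZMod p) := mul_left_cancel₀ haz hc
    have e1 : ((j1 : ℕ) : ZMod p).val = j1 := ZMod.val_cast_of_lt (by omega)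
    have e2 : ((j2 : ℕ) : ZMod p).val = j2 := ZMod.val_cast_of_lt (by omega)
    rw [← e1, ← e2, hj]
  have himg : (Finset.Icc 1 (p-1)).image Rr = Finset.Icc 1 (p-1) := by
    have hsub : (Finset.Icc 1 (p-1)).image Rr ⊆ Finset.Icc 1 (p-1) := by
      intro x hx
      simp only [Finset.mem_image] at hx
      obtain ⟨j, hj, rfl⟩ := hx
      have hlt : a*j % p < p := Nat.mod_lt _ (by omega)
      have hne : a*j % p ≠ 0 := by
        intro h; exact haj j hj (Nat.dvd_iff_mod_eq_zero.mpr h)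
      simp only [Finset.mem_Icc, hRr]
      omega
    exact Finset.eq_of_subset_of_card_le hsub
      (by rw [Finset.card_image_of_injOn hinj])
  have hperm : ∏ j ∈ Finset.Icc 1 (p-1), (Rr j : ℕ) = ∏ j ∈ Finset.Icc 1 (p-1), j := by
    conv_rhs => rw [← himg]
    rw [Finset.prod_image (fun x hx y hy h => hinj hx hy h)]
  -- product identities in ZMod p²
  have prodL : ∏ j ∈ Finset.Icc 1 (p-1), ((a*j : ℕ) : ZMod (p^2))
      = (a : ZMod (p^2))^(p-1) * ∏ j ∈ Finset.Icc 1 (p-1), ((j : ℕ) : ZMod (p^2)) := by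
    have hc : ∀ j ∈ Finset.Icc 1 (p-1),
        ((a*j : ℕ) : ZMod (p^2)) = (a : ZMod (p^2)) * ((j : ℕ) : ZMod (p^2)) := by
      intro j hj; push_cast; ring
    rw [Finset.prod_congr rfl hc, Finset.prod_mul_distrib, Finset.prod_const, Nat.card_Icc,
      show p - 1 + 1 - 1 = p - 1 from by omega]
  have prodR : ∏ j ∈ Finset.Icc 1 (p-1), ((a*j : ℕ) : ZMod (p^2))
      = (∏ j ∈ Finset.Icc 1 (p-1), ((j : ℕ) : ZMod (p^2)))
        * (1 + (p : ZMod (p^2)) * ∑ j ∈ Finset.Icc 1 (p-1), ((F j * NI j : ℕ) : ZMod (p^2))) := by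
    rw [Finset.prod_congr rfl key, Finset.prod_mul_distrib, prod_one_add]
    congr 1
    calc ∏ j ∈ Finset.Icc 1 (p-1), ((Rr j : ℕ) : ZMod (p^2))
        = ((∏ j ∈ Finset.Icc 1 (p-1), Rr j : ℕ) : ZMod (p^2)) := by rw [Nat.cast_prod]
    _ = ((∏ j ∈ Finset.Icc 1 (p-1), j : ℕ) : ZMod (p^2)) := by rw [hperm]
    _ = ∏ j ∈ Finset.Icc 1 (p-1), ((j : ℕ) : ZMod (p^2)) := by rw [Nat.cast_prod]
  have hunit : IsUnit (∏ j ∈ Finset.Icc 1 (p-1), ((j : ℕ) : ZMod (p^2))) := by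
    rw [← Nat.cast_prod, ZMod.isUnit_iff_coprime]
    apply Nat.Coprime.pow_right
    apply Nat.Coprime.prod_left
    intro i hi
    simp only [Finset.mem_Icc] at hi
    exact Nat.Coprime.symm ((Nat.Prime.coprime_iff_not_dvd hp.out).mpr
      (fun hd => by have := Nat.le_of_dvd (by omega) hd; omega))
  have main : (a : ZMod (p^2))^(p-1)
      = 1 + (p : ZMod (p^2)) * ∑ j ∈ Finset.Icc 1 (p-1), ((F j * NI j : ℕ) : ZMod (p^2)) := by
    apply hunit.mul_left_cancel
    rw [← prodR, prodL, mul_comm]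
  -- bridge to the Fermat quotient
  set u : ℤ := ((a : ℤ)^(p-1) - 1)/(p : ℤ) with hu
  have hpu : (p : ℤ) * u = (a : ℤ)^(p-1) - 1 := qz_spec ha
  set S : ℕ := ∑ j ∈ Finset.Icc 1 (p-1), F j * NI j with hS
  have hr : (p : ZMod (p^2)) * ((u : ℤ) : ZMod (p^2))
      = (p : ZMod (p^2)) * (((S : ℕ) : ℤ) : ZMod (p^2)) := by
    have h1 : (((p : ℤ) * u : ℤ) : ZMod (p^2)) = ((a : ZMod (p^2)))^(p-1) - 1 := by
      rw [hpu]; push_cast; ring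
    have h2 : ((a : ZMod (p^2)))^(p-1) - 1
        = (p : ZMod (p^2)) * ((S : ℕ) : ZMod (p^2)) := by
      rw [main, hS]; push_cast; ring
    calc (p : ZMod (p^2)) * ((u : ℤ) : ZMod (p^2))
        = (((p : ℤ) * u : ℤ) : ZMod (p^2)) := by push_cast; ring
    _ = ((a : ZMod (p^2)))^(p-1) - 1 := h1
    _ = (p : ZMod (p^2)) * ((S : ℕ) : ZMod (p^2)) := h2
    _ = (p : ZMod (p^2)) * (((S : ℕ) : ℤ) : ZMod (p^2)) := by push_cast; ring
  have hmodp : ((u : ℤ) : ZMod p) = ((S : ℕ) : ZMod p) := by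
    have := (pmul_iff (p := p) u ((S : ℕ) : ℤ)).mp hr
    push_cast at this ⊢
    exact this
  show (a : ZMod p) * ((u : ℤ) : ZMod p) = _
  rw [hmodp, hS, Nat.cast_sum, Finset.mul_sum]
  apply Finset.sum_congr rfl
  intro j hj
  simp only [Finset.mem_Icc] at hj
  have hjz : ((j : ℕ) : ZMod p) ≠ 0 := by
    intro h
    have h1 := (ZMod.natCast_eq_zero_iff j p).mp h
    have := Nat.le_of_dvd (by omega) h1
    omega
  rw [Nat.cast_mul, hNIcast j,
    show ((a*j : ℕ) : ZMod p) = (a : ZMod p) * ((j : ℕ) : ZMod p) from by push_cast; ring,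
    mul_inv]
  field_simp
  simp only [hF]

end Glaisher

section Swap
variable {p : ℕ} [hp : Fact p.Prime]

lemma tail_sum (hodd : p % 2 = 1) {m : ℕ} (hm : m ≤ p - 1) :
    ∑ j ∈ Finset.Ioc m (p-1), ((j : ZMod p))⁻¹ = - harmonicMod p m := by
  have hsplit : harmonicMod p m + ∑ j ∈ Finset.Ioc m (p-1), ((j : ZMod p))⁻¹
      = harmonicMod p (p-1) := by
    unfold harmonicMod
    rw [show Finset.Icc 1 m = Finset.Ioc 0 m by rw [← Finset.Icc_add_one_left_eq_Ioc, zero_add],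
        show Finset.Icc 1 (p-1) = Finset.Ioc 0 (p-1) by rw [← Finset.Icc_add_one_left_eq_Ioc, zero_add]]
    exact Finset.sum_Ioc_consecutive _ (Nat.zero_le m) hm
  rw [harm_p_sub_one hodd] at hsplit
  linear_combination hsplit

lemma glaisher_harm {a : ℕ} (ha : ¬ p ∣ a) (ha1 : 1 ≤ a) (hodd : p % 2 = 1) :
    (a : ZMod p) * qz p a = - ∑ k ∈ Finset.Icc 1 (a-1), harmonicMod p (k*p/a) := by
  have hp2 : 2 ≤ p := hp.out.two_le
  rw [glaisher ha]
  have hcast : ∀ j ∈ Finset.Icc 1 (p-1), ((a*j/p : ℕ) : ZMod p)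
      = ∑ k ∈ Finset.Icc 1 (a-1), if k*p/a < j then (1 : ZMod p) else 0 := by
    intro j hj
    simp only [Finset.mem_Icc] at hj
    have hnat : a*j/p = ((Finset.Icc 1 (a-1)).filter (fun k => k*p/a < j)).card := by
      have hub : a*j/p ≤ a-1 := by
        have h1 : a*j/p < a := by
          rw [Nat.div_lt_iff_lt_mul (by omega)]
          have hjp : j < p := by omega
          exact Nat.mul_lt_mul_of_pos_left hjp (by omega)
        exact Nat.le_pred_of_lt h1
      have hfil : (Finset.Icc 1 (a-1)).filter (fun k => k*p/a < j)
          = Finset.Icc 1 (a*j/p) := by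
        ext k
        simp only [Finset.mem_filter, Finset.mem_Icc]
        constructor
        · rintro ⟨⟨h1, h2⟩, h3⟩
          refine ⟨h1, ?_⟩
          rw [Nat.div_lt_iff_lt_mul (by omega)] at h3
          rw [Nat.le_div_iff_mul_le (by omega)]
          have hc : j*a = a*j := Nat.mul_comm j a
          omega
        · rintro ⟨h1, h2⟩
          refine ⟨⟨h1, by omega⟩, ?_⟩
          rw [Nat.le_div_iff_mul_le (by omega)] at h2
          rw [Nat.div_lt_iff_lt_mul (by omega)]
          have hne : k*p ≠ a*j := by
            intro h
            have hdvd : p ∣ a*j := ⟨k, by rw [← h]; ring⟩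
            rcases (Nat.Prime.dvd_mul hp.out).mp hdvd with h' | h'
            · exact ha h'
            · have := Nat.le_of_dvd (by omega) h'; omega
          have hc : j*a = a*j := Nat.mul_comm j a
          omega
      rw [hfil, Nat.card_Icc]
      exact (Nat.succ_sub_one _).symm
    rw [hnat]
    rw [Finset.card_filter]
    push_cast
    rfl
  rw [Finset.sum_congr rfl (fun j hj => by rw [hcast j hj])]
  have hswap : ∑ j ∈ Finset.Icc 1 (p-1),
      (∑ k ∈ Finset.Icc 1 (a-1), if k*p/a < j then (1 : ZMod p) else 0) * ((j : ZMod p))⁻¹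
      = ∑ k ∈ Finset.Icc 1 (a-1), ∑ j ∈ Finset.Icc 1 (p-1),
          (if k*p/a < j then (1 : ZMod p) else 0) * ((j : ZMod p))⁻¹ := by
    rw [Finset.sum_comm]
    apply Finset.sum_congr rfl
    intro k _
    rw [← Finset.sum_mul]
  rw [hswap, ← Finset.sum_neg_distrib]
  apply Finset.sum_congr rfl
  intro k hk
  simp only [Finset.mem_Icc] at hk
  have hm : k*p/a ≤ p-1 := by
    have h1 : k*p/a < p := by
      rw [Nat.div_lt_iff_lt_mul (by omega)]
      have : k < a := Nat.lt_of_le_of_lt hk.2 (Nat.sub_lt (by omega) one_pos)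
      exact lt_of_lt_of_eq (Nat.mul_lt_mul_of_pos_right this (by omega)) (Nat.mul_comm a p)
    exact Nat.le_pred_of_lt h1
  have hfil : (Finset.Icc 1 (p-1)).filter (fun j => k*p/a < j)
      = Finset.Ioc (k*p/a) (p-1) := by
    ext j
    simp only [Finset.mem_filter, Finset.mem_Icc, Finset.mem_Ioc]
    constructor
    · rintro ⟨⟨h1, h2⟩, h3⟩; exact ⟨h3, h2⟩
    · rintro ⟨h1, h2⟩
      exact ⟨⟨Nat.lt_of_le_of_lt (Nat.zero_le _) h1, h2⟩, h1⟩
  simp only [ite_mul, one_mul, zero_mul]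
  rw [← Finset.sum_filter, hfil]
  exact tail_sum hodd hm

end Swap

theorem harmonic_zero_iff_wieferich_432 (p : ℕ) (hp : p.Prime) (h5 : 5 < p) :
    harmonicMod p (p / 6) = 0 ↔ (p : ℤ) ^ 2 ∣ 432 ^ (p - 1) - 1 := by
  haveI : Fact p.Prime := ⟨hp⟩
  have h2 : ¬ p ∣ 2 := fun h => by have := Nat.le_of_dvd (by norm_num) h; omega
  have h3 : ¬ p ∣ 3 := fun h => by have := Nat.le_of_dvd (by norm_num) h; omega
  have h6 : ¬ p ∣ 6 := fun h => by
    have := Nat.le_of_dvd (by norm_num) h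
    have hp6 : p = 6 := by omega
    rw [hp6] at hp; norm_num at hp
  have hpd : ∀ i j : ℕ, ¬ p ∣ i → ¬ p ∣ j → ¬ p ∣ i*j := by
    intro i j hi hj h
    rcases (Nat.Prime.dvd_mul hp).mp h with h | h <;> tauto
  have h2' : ¬ (2 ∣ p) := by
    intro h; rcases (Nat.Prime.eq_one_or_self_of_dvd hp 2 h) with h' | h' <;> omega
  have h3' : ¬ (3 ∣ p) := by
    intro h; rcases (Nat.Prime.eq_one_or_self_of_dvd hp 3 h) with h' | h' <;> omega
  have hodd : p % 2 = 1 := by omega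
  have hmod6 : p % 6 = 1 ∨ p % 6 = 5 := by omega
  have hp0 : (p : ℤ) ≠ 0 := by exact_mod_cast hp.ne_zero
  have hz2 : (2 : ZMod p) ≠ 0 := by
    intro h
    exact h2 ((ZMod.natCast_eq_zero_iff 2 p).mp (by exact_mod_cast h))
  -- the three harmonic equations
  have e2 := glaisher_harm (p := p) h2 (by norm_num) hodd
  have e3 := glaisher_harm (p := p) h3 (by norm_num) hodd
  have e6 := glaisher_harm (p := p) h6 (by norm_num) hodd
  rw [show (2:ℕ)-1 = 1 from rfl, Finset.Icc_self, Finset.sum_singleton,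
    show 1*p/2 = p/2 from by rw [one_mul]] at e2
  rw [show (3:ℕ)-1 = 2 from rfl,
    show Finset.Icc (1:ℕ) 2 = {1, 2} from by decide,
    Finset.sum_insert (by decide), Finset.sum_singleton,
    show 1*p/3 = p/3 from by rw [one_mul]] at e3
  rw [show (6:ℕ)-1 = 5 from rfl,
    show Finset.Icc (1:ℕ) 5 = insert 1 (insert 2 (insert 3 (insert 4 {5}))) from by decide,
    Finset.sum_insert (by decide), Finset.sum_insert (by decide),
    Finset.sum_insert (by decide), Finset.sum_insert (by decide), Finset.sum_singleton,
    show 1*p/6 = p/6 from by rw [one_mul],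
    show 2*p/6 = p/3 from by omega,
    show 3*p/6 = p/2 from by omega,
    show 4*p/6 = 2*p/3 from by omega] at e6
  -- symmetry
  have hs23 : harmonicMod p (2*p/3) = harmonicMod p (p/3) := by
    rw [show 2*p/3 = p - 1 - p/3 from by omega]
    exact harm_sym hodd (by omega)
  have hs56 : harmonicMod p (5*p/6) = harmonicMod p (p/6) := by
    rw [show 5*p/6 = p - 1 - p/6 from by omega]
    exact harm_sym hodd (by omega)
  rw [hs23] at e3 e6
  rw [hs56] at e6
  -- Fermat quotient of 432
  have q6 : qz p 6 = qz p 2 + qz p 3 := by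
    rw [show (6:ℕ) = 2*3 from rfl] at *
    exact qz_mul h2 h3
  have q432 : qz p 432 = 4 * qz p 2 + 3 * qz p 3 := by
    have c1 : qz p 432 = qz p 6 + qz p 72 := by
      rw [show (432:ℕ) = 6*72 from rfl]; exact qz_mul h6 (hpd 6 12 h6 (hpd 2 6 h2 h6))
    have c2 : qz p 72 = qz p 6 + qz p 12 := by
      rw [show (72:ℕ) = 6*12 from rfl]; exact qz_mul h6 (hpd 2 6 h2 h6)
    have c3 : qz p 12 = qz p 2 + qz p 6 := by
      rw [show (12:ℕ) = 2*6 from rfl]; exact qz_mul h2 h6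
    rw [c1, c2, c3, q6]; ring
  -- the key relation
  have key : (2 : ZMod p) * harmonicMod p (p/6) = - qz p 432 := by
    rw [q432]
    rw [q6] at e6
    push_cast at e2 e3 e6
    linear_combination e6 - e2 - e3
  -- conclusion
  set u : ℤ := (((432:ℕ) : ℤ)^(p-1) - 1)/(p : ℤ) with hu
  have h432 : ¬ p ∣ 432 := hpd 6 72 h6 (hpd 6 12 h6 (hpd 2 6 h2 h6))
  have hpu : (p : ℤ) * u = ((432:ℕ) : ℤ)^(p-1) - 1 := qz_spec h432
  have hiff1 : qz p 432 = 0 ↔ (p : ℤ) ∣ u := by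
    rw [show qz p 432 = ((u : ℤ) : ZMod p) from rfl]
    exact ZMod.intCast_zmod_eq_zero_iff_dvd u p
  have hiff2 : (p : ℤ) ∣ u ↔ (p : ℤ)^2 ∣ 432^(p-1) - 1 := by
    constructor
    · rintro ⟨c, hc⟩
      refine ⟨c, ?_⟩
      have h432e : (432:ℤ)^(p-1) - 1 = (p:ℤ) * u := by rw [hpu]; norm_num
      rw [h432e, hc]; ring
    · rintro ⟨c, hc⟩
      have h1 : (p : ℤ) * u = (p : ℤ)^2 * c := by
        rw [hpu]; push_cast at hc ⊢; linarith
      have h2 : u = (p : ℤ) * c := by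
        have : (p : ℤ) * u = (p : ℤ) * ((p : ℤ) * c) := by rw [h1]; ring
        exact mul_left_cancel₀ hp0 this
      exact ⟨c, h2⟩
  constructor
  · intro h0
    rw [h0, mul_zero] at key
    have hq : qz p 432 = 0 := by linear_combination key
    exact hiff2.mp (hiff1.mp hq)
  · intro hd
    have hq : qz p 432 = 0 := hiff1.mpr (hiff2.mpr hd)
    rw [hq, neg_zero] at key
    rcases mul_eq_zero.mp key with h | h
    · exact absurd h hz2
    · exact h
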